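/- Let M be a smooth closed connected manifold (compact, without boundary) of dimension n ≥ 1, and let F ⊆ M be a nonempty finite subset. Then there exists a smooth (C^∞) function f : M → ℝ whose values all lie in [0,1], which attains the value 1, such that f⁻¹(0) = F, and such that every critical point x of f satisfies f(x) = 0 or f(x) = 1. -/

import Mathlib

open Set intervalIntegral
open scoped ContDiff Manifold RealInnerProductSpace

noncomputable section ReebProfile

/-- bump profile -/
def reebBump (t : ℝ) : ℝ := expNegInvGlue t * expNegInvGlue (1 - t)

lemma reebBump_nonneg (t : ℝ) : 0 ≤ reebBump t :=
  mul_nonneg (expNegInvGlue.nonneg t) (expNegInvGlue.nonneg _)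

lemma reebBump_pos {t : ℝ} (h0 : 0 < t) (h1 : t < 1) : 0 < reebBump t :=
  mul_pos (expNegInvGlue.pos_of_pos h0) (expNegInvGlue.pos_of_pos (by linarith))

lemma reebBump_zero_of_nonpos {t : ℝ} (h : t ≤ 0) : reebBump t = 0 := by
  simp [reebBump, expNegInvGlue.zero_of_nonpos h]

lemma reebBump_zero_of_one_le {t : ℝ} (h : 1 ≤ t) : reebBump t = 0 := by
  simp [reebBump, expNegInvGlue.zero_of_nonpos (by linarith : 1 - t ≤ 0)]

lemma contDiff_reebBump {n : ℕ∞} : ContDiff ℝ n reebBump := by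
  have h : reebBump = fun t => expNegInvGlue t * expNegInvGlue ((fun s => 1 - s) t) := rfl
  rw [h]
  exact expNegInvGlue.contDiff.mul (expNegInvGlue.contDiff.comp (contDiff_const.sub contDiff_id))

lemma continuous_reebBump : Continuous reebBump := contDiff_reebBump (n := 0).continuous

/-- normalization constant -/
def reebC : ℝ := ∫ s in (0:ℝ)..1, reebBump s

lemma reebC_pos : 0 < reebC := by
  apply intervalIntegral_pos_of_pos_on (continuous_reebBump.intervalIntegrable 0 1)
  · intro x hx; exact reebBump_pos hx.1 hx.2
  · exact one_pos

/-- smooth nondecreasing step, 0 for t ≤ 0, 1 for t ≥ 1, derivative positive on (0,1) -/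
def reebStep (t : ℝ) : ℝ := (∫ s in (0:ℝ)..t, reebBump s) / reebC

lemma hasDerivAt_reebStep (t : ℝ) : HasDerivAt reebStep (reebBump t / reebC) t :=
  ((continuous_reebBump.integral_hasStrictDerivAt 0 t).hasDerivAt).div_const _

lemma reebStep_zero_of_nonpos {t : ℝ} (h : t ≤ 0) : reebStep t = 0 := by
  have : (∫ s in (0:ℝ)..t, reebBump s) = ∫ s in (0:ℝ)..t, (0:ℝ) := by
    apply intervalIntegral.integral_congr
    intro s hs
    rw [uIcc_of_ge h] at hs
    exact reebBump_zero_of_nonpos hs.2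
  simp [reebStep, this]

lemma reebStep_one_of_one_le {t : ℝ} (h : 1 ≤ t) : reebStep t = 1 := by
  have h2 : (∫ s in (1:ℝ)..t, reebBump s) = ∫ s in (1:ℝ)..t, (0:ℝ) := by
    apply intervalIntegral.integral_congr
    intro s hs
    rw [uIcc_of_le h] at hs
    exact reebBump_zero_of_one_le hs.1
  have h3 : (∫ s in (0:ℝ)..t, reebBump s) = reebC := by
    rw [← intervalIntegral.integral_add_adjacent_intervals
      (continuous_reebBump.intervalIntegrable 0 1) (continuous_reebBump.intervalIntegrable 1 t)]
    simp [h2, reebC]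
  rw [reebStep, h3, div_self reebC_pos.ne']

lemma reebStep_nonneg (t : ℝ) : 0 ≤ reebStep t := by
  rcases le_or_gt t 0 with h | h
  · rw [reebStep_zero_of_nonpos h]
  · exact div_nonneg (intervalIntegral.integral_nonneg h.le (fun s _ => reebBump_nonneg s))
      reebC_pos.le

lemma reebStep_le_one (t : ℝ) : reebStep t ≤ 1 := by
  rcases le_or_gt 1 t with h | h
  · rw [reebStep_one_of_one_le h]
  · rcases le_or_gt t 0 with h0 | h0
    · rw [reebStep_zero_of_nonpos h0]; norm_num
    · rw [reebStep, div_le_one reebC_pos]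
      have : reebC = (∫ s in (0:ℝ)..t, reebBump s) + ∫ s in t..1, reebBump s := by
        rw [intervalIntegral.integral_add_adjacent_intervals
          (continuous_reebBump.intervalIntegrable 0 t) (continuous_reebBump.intervalIntegrable t 1)]
        rfl
      rw [this]
      have : 0 ≤ ∫ s in t..1, reebBump s :=
        intervalIntegral.integral_nonneg h.le (fun s _ => reebBump_nonneg s)
      linarith

lemma reebStep_pos {t : ℝ} (h : 0 < t) : 0 < reebStep t := by
  rcases le_or_gt 1 t with h1 | h1
  · rw [reebStep_one_of_one_le h1]; norm_num
  · apply div_pos _ reebC_pos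
    apply intervalIntegral_pos_of_pos_on (continuous_reebBump.intervalIntegrable 0 t)
      (fun s hs => reebBump_pos hs.1 (lt_trans hs.2 h1)) h

lemma contDiff_reebStep : ContDiff ℝ (⊤ : ℕ∞) reebStep := by
  rw [show (((⊤ : ℕ∞) : WithTop ℕ∞)) = ∞ from rfl] at *
  rw [contDiff_infty_iff_deriv]
  constructor
  · exact fun t => (hasDerivAt_reebStep t).differentiableAt
  · have : deriv reebStep = fun t => reebBump t / reebC := by
      funext t; exact (hasDerivAt_reebStep t).deriv
    rw [this]
    exact contDiff_reebBump.div_const _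

end ReebProfile

set_option maxHeartbeats 1000000 in
/-- On a smooth closed connected manifold of dimension `n ≥ 1`, for every nonempty finite
subset `F`, there is a Reeb function `f : M → [0,1]` attaining the value `1`, with
`f⁻¹(0) = F`, whose only critical values are `0` and `1`. -/
theorem stmt_1
    {E : Type*} [NormedAddCommGroup E] [NormedSpace ℝ E] [FiniteDimensional ℝ E]
    {H : Type*} [TopologicalSpace H] (I : ModelWithCorners ℝ E H) [I.Boundaryless]
    (M : Type*) [TopologicalSpace M] [ChartedSpace H M] [IsManifold I (⊤ : ℕ∞) M]
    [T2Space M] [CompactSpace M] [ConnectedSpace M]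
    (hdim : 1 ≤ Module.finrank ℝ E)
    (F : Set M) (hFne : F.Nonempty) (hFfin : F.Finite) :
    ∃ f : M → ℝ,
      ContMDiff I 𝓘(ℝ) (⊤ : ℕ∞) f ∧
      (∀ x, f x ∈ Set.Icc (0 : ℝ) 1) ∧
      (∃ x, f x = 1) ∧
      f ⁻¹' {0} = F ∧
      (∀ x, mfderiv I 𝓘(ℝ) f x = 0 → f x = 0 ∨ f x = 1) := by
  classical
  haveI := Manifold.metrizableSpace I M
  letI : MetricSpace M := TopologicalSpace.metrizableSpaceMetric M
  set eL : E ≃L[ℝ] EuclideanSpace ℝ (Fin (Module.finrank ℝ E)) := toEuclidean with heL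
  set S : Finset M := hFfin.toFinset with hS
  -- a uniform separation radius
  obtain ⟨δ, hδ0, hδsep⟩ : ∃ δ : ℝ, 0 < δ ∧ ∀ p ∈ S, ∀ q ∈ S, p ≠ q → 2 * δ ≤ dist p q := by
    set T := (S ×ˢ S).filter (fun pq => pq.1 ≠ pq.2) with hT
    rcases T.eq_empty_or_nonempty with h | h
    · refine ⟨1, one_pos, fun p hp q hq hpq => ?_⟩
      exfalso
      have : (p, q) ∈ T := by simp [hT, Finset.mem_filter, Finset.mem_product, hp, hq, hpq]
      simp [h] at this
    · refine ⟨(T.inf' h fun pq => dist pq.1 pq.2) / 2, ?_, ?_⟩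
      · obtain ⟨pq, hpq, hEq⟩ := T.exists_mem_eq_inf' h fun pq => dist pq.1 pq.2
        have : pq.1 ≠ pq.2 := by
          simp only [hT, Finset.mem_filter] at hpq; exact hpq.2
        have := dist_pos.mpr this
        rw [hEq]; linarith
      · intro p hp q hq hpq
        have hm : (p, q) ∈ T := by
          simp [hT, Finset.mem_filter, Finset.mem_product, hp, hq, hpq]
        have := Finset.inf'_le (fun pq => dist pq.1 pq.2) hm
        simp only at this
        linarith
  -- choice of chart radii
  have hex : ∀ p : M, ∃ ε : ℝ, 0 < ε ∧
      (∀ z : E, ‖eL (z - extChartAt I p p)‖ ≤ ε → z ∈ (extChartAt I p).target) ∧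
      (∀ x : M, x ∈ (extChartAt I p).source →
        ‖eL (extChartAt I p x - extChartAt I p p)‖ ≤ ε → x ∈ Metric.ball p δ) := by
    intro p
    set ψ := extChartAt I p with hψ
    have hNmem : ψ.target ∩ ψ.symm ⁻¹' (Metric.ball p δ) ∈ nhds (ψ p) := by
      apply Filter.inter_mem (extChartAt_target_mem_nhds p)
      apply (continuousAt_extChartAt_symm p).preimage_mem_nhds
      rw [show ψ.symm (ψ p) = p from ψ.left_inv (mem_extChartAt_source p)]
      exact Metric.ball_mem_nhds p hδ0
    obtain ⟨r, hr0, hrN⟩ := Metric.mem_nhds_iff.mp hNmem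
    set eS : EuclideanSpace ℝ (Fin (Module.finrank ℝ E)) →L[ℝ] E := eL.symm.toContinuousLinearMap with heS
    set C : ℝ := ‖eS‖ + 1 with hC
    have hC0 : 0 < C := by positivity
    refine ⟨r / (2 * C), by positivity, ?_⟩
    have key : ∀ z : E, ‖eL (z - ψ p)‖ ≤ r / (2 * C) →
        z ∈ ψ.target ∩ ψ.symm ⁻¹' (Metric.ball p δ) := by
      intro z hz
      apply hrN
      rw [Metric.mem_ball, dist_eq_norm]
      have h2 := eS.le_opNorm (eL (z - ψ p))
      have h1 : eS (eL (z - ψ p)) = z - ψ p := by simp [heS]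
      rw [h1] at h2
      have h3 : ‖eS‖ * ‖eL (z - ψ p)‖ ≤ C * (r / (2 * C)) := by
        apply mul_le_mul _ hz (norm_nonneg _) hC0.le
        rw [hC]; linarith
      have h4 : C * (r / (2 * C)) = r / 2 := by field_simp
      calc ‖z - ψ p‖ ≤ C * (r / (2 * C)) := h2.trans h3
        _ = r / 2 := h4
        _ < r := by linarith
    refine ⟨fun z hz => (key z hz).1, fun x hx hxz => ?_⟩
    have := (key _ hxz).2
    rwa [Set.mem_preimage, ψ.left_inv hx] at this
  choose ε hε0 hεtgt hεball using hex
  set c : M → ℝ := fun p => 4 / (ε p)^2 with hc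
  have hc0 : ∀ p, 0 < c p := fun p => div_pos four_pos (pow_pos (hε0 p) 2)
  set W : M → Set M := fun p =>
    {x | x ∈ (extChartAt I p).source ∧ ‖eL (extChartAt I p x - extChartAt I p p)‖ < ε p} with hW
  set g : M → M → ℝ := fun p x =>
    if x ∈ W p then reebStep (c p * ‖eL (extChartAt I p x - extChartAt I p p)‖^2) else 1 with hg
  set K : M → Set M := fun p =>
    (extChartAt I p).symm '' {z | ‖eL (z - extChartAt I p p)‖ ≤ ε p / 2} with hK
  have hWopen : ∀ p, IsOpen (W p) := by
    intro p
    have h : W p = (extChartAt I p).source ∩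
        (fun x => ‖eL (extChartAt I p x - extChartAt I p p)‖) ⁻¹' (Set.Iio (ε p)) := by
      ext x; simp [hW, Set.mem_setOf_eq]
    rw [h]
    apply ContinuousOn.isOpen_inter_preimage _ (isOpen_extChartAt_source p) isOpen_Iio
    exact (eL.continuous.comp_continuousOn
      ((continuousOn_extChartAt p).sub continuousOn_const)).norm
  have hmemW : ∀ p, p ∈ W p := by
    intro p
    refine ⟨mem_extChartAt_source p, ?_⟩
    simp [hε0 p]
  have hKW : ∀ p, K p ⊆ W p := by
    intro p x hx
    obtain ⟨z, hz, rfl⟩ := hx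
    have hztgt : z ∈ (extChartAt I p).target := hεtgt p z (le_trans hz (by linarith [hε0 p]))
    have hsrc := (extChartAt I p).map_target hztgt
    have hinv : extChartAt I p ((extChartAt I p).symm z) = z := (extChartAt I p).right_inv hztgt
    refine ⟨hsrc, ?_⟩
    rw [hinv]
    calc ‖eL (z - extChartAt I p p)‖ ≤ ε p / 2 := hz
      _ < ε p := by linarith [hε0 p]
  have hWball : ∀ p, W p ⊆ Metric.ball p δ := fun p x hx => hεball p x hx.1 hx.2.le
  have hgone : ∀ p, ∀ x, x ∉ K p → g p x = 1 := by
    intro p x hx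
    rw [hg]
    by_cases hxW : x ∈ W p
    · simp only [if_pos hxW]
      apply reebStep_one_of_one_le
      have hgt : ε p / 2 < ‖eL (extChartAt I p x - extChartAt I p p)‖ := by
        by_contra hle
        push_neg at hle
        exact hx ⟨extChartAt I p x, hle, (extChartAt I p).left_inv hxW.1⟩
      have hε := hε0 p
      have hsq : (ε p / 2)^2 ≤ ‖eL (extChartAt I p x - extChartAt I p p)‖^2 :=
        pow_le_pow_left₀ (by linarith) hgt.le 2
      have hone : c p * (ε p / 2)^2 = 1 := by
        rw [hc]; field_simp; ring
      have := mul_le_mul_of_nonneg_left hsq (hc0 p).le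
      linarith
    · simp only [if_neg hxW]
  have hKclosed : ∀ p, IsClosed (K p) := by
    intro p
    have hD : IsCompact {z : E | ‖eL (z - extChartAt I p p)‖ ≤ ε p / 2} := by
      have heq : {z : E | ‖eL (z - extChartAt I p p)‖ ≤ ε p / 2}
          = eL.toHomeomorph ⁻¹' (Metric.closedBall (eL (extChartAt I p p)) (ε p / 2)) := by
        ext z
        simp [Metric.mem_closedBall, dist_eq_norm, map_sub]
      rw [heq]
      exact eL.toHomeomorph.isCompact_preimage.mpr (isCompact_closedBall _ _)
    have hsub : {z : E | ‖eL (z - extChartAt I p p)‖ ≤ ε p / 2} ⊆ (extChartAt I p).target :=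
      fun z hz => hεtgt p z (le_trans hz (by linarith [hε0 p]))
    rw [hK]
    exact (hD.image_of_continuousOn ((continuousOn_extChartAt_symm p).mono hsub)).isClosed
  have hg01 : ∀ p x, g p x ∈ Set.Icc (0:ℝ) 1 := by
    intro p x
    rw [hg]
    by_cases hx : x ∈ W p
    · simp only [if_pos hx]
      exact ⟨reebStep_nonneg _, reebStep_le_one _⟩
    · simp only [if_neg hx]
      exact ⟨zero_le_one, le_refl 1⟩
  have hgzero : ∀ p x, g p x = 0 ↔ x = p := by
    intro p x
    constructor
    · intro h0
      by_cases hxW : x ∈ W p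
      · rw [hg] at h0
        simp only [if_pos hxW] at h0
        have ht : ¬ (0 < c p * ‖eL (extChartAt I p x - extChartAt I p p)‖^2) := by
          intro hpos
          exact (reebStep_pos hpos).ne' h0
        push_neg at ht
        have hnn : (0:ℝ) ≤ ‖eL (extChartAt I p x - extChartAt I p p)‖^2 := sq_nonneg _
        have hsq0 : ‖eL (extChartAt I p x - extChartAt I p p)‖^2 = 0 := by
          nlinarith [hc0 p]
        have hnz : ‖eL (extChartAt I p x - extChartAt I p p)‖ = 0 :=
          pow_eq_zero_iff two_ne_zero |>.mp hsq0
        have hz : extChartAt I p x - extChartAt I p p = 0 := by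
          have h' := norm_eq_zero.mp hnz
          exact eL.injective (by rw [h', map_zero])
        have heq : extChartAt I p x = extChartAt I p p := sub_eq_zero.mp hz
        exact (extChartAt I p).injOn hxW.1 (mem_extChartAt_source p) heq
      · rw [hg] at h0
        simp only [if_neg hxW] at h0
        norm_num at h0
    · rintro rfl
      rw [hg]
      have hm := hmemW x
      simp only [if_pos hm, sub_self, map_zero, norm_zero]
      have hz : c x * (0:ℝ)^2 = 0 := by ring
      rw [hz]
      exact reebStep_zero_of_nonpos le_rfl
  have hgsmooth : ∀ p x, ContMDiffAt I 𝓘(ℝ) (⊤ : ℕ∞) (g p) x := by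
    intro p x
    by_cases hxW : x ∈ W p
    · have hsrc : x ∈ (chartAt H p).source := by
        rw [← extChartAt_source I]; exact hxW.1
      have hψ : ContMDiffAt I 𝓘(ℝ, E) (⊤ : ℕ∞) (extChartAt I p) x :=
        contMDiffOn_extChartAt.contMDiffAt ((chartAt H p).open_source.mem_nhds hsrc)
      have hG : ContDiff ℝ (⊤:ℕ∞)
          (fun z : E => reebStep (c p * ‖eL.toContinuousLinearMap z - eL (extChartAt I p p)‖^2)) := by
        apply contDiff_reebStep.comp
        apply contDiff_const.mul
        exact (eL.toContinuousLinearMap.contDiff.sub contDiff_const).norm_sq ℝ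
      have hcomp := hG.contDiffAt.comp_contMDiffAt (f := extChartAt I p) (x := x) hψ
      apply hcomp.congr_of_eventuallyEq
      filter_upwards [(hWopen p).mem_nhds hxW] with y hy
      rw [hg]
      simp only [if_pos hy, Function.comp_apply, map_sub]
      rfl
    · have hxK : x ∉ K p := fun h => hxW (hKW p h)
      apply (contMDiffAt_const (c := (1:ℝ))).congr_of_eventuallyEq
      filter_upwards [(hKclosed p).isOpen_compl.mem_nhds hxK] with y hy
      exact hgone p y hy
  have hcrit : ∀ p, ∀ x ∈ W p, mfderiv I 𝓘(ℝ) (g p) x = 0 → g p x = 0 ∨ g p x = 1 := by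
    intro p x hxW hm0
    set u₀ : EuclideanSpace ℝ (Fin (Module.finrank ℝ E)) :=
      eL.toContinuousLinearMap (extChartAt I p x) - eL (extChartAt I p p) with hu₀
    set t₀ : ℝ := c p * ‖u₀‖^2 with ht₀
    have hgx : g p x = reebStep t₀ := by
      rw [hg]
      simp only [if_pos hxW]
      rw [ht₀, hu₀]
      rw [map_sub]
      rfl
    by_cases h0 : t₀ ≤ 0
    · left; rw [hgx]; exact reebStep_zero_of_nonpos h0
    by_cases h1 : 1 ≤ t₀
    · right; rw [hgx]; exact reebStep_one_of_one_le h1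
    push_neg at h0 h1
    exfalso
    have hnu : 0 < ‖u₀‖^2 := by
      rcases lt_or_ge 0 (‖u₀‖^2) with h | h
      · exact h
      · exfalso; rw [ht₀] at h0; nlinarith [hc0 p]
    have hu0ne : u₀ ≠ 0 := by
      intro h; rw [h] at hnu; simp at hnu
    -- chart-side derivative
    have hA : HasFDerivAt (fun z : E => eL.toContinuousLinearMap z - eL (extChartAt I p p))
        eL.toContinuousLinearMap (extChartAt I p x) :=
      eL.toContinuousLinearMap.hasFDerivAt.sub_const _
    have hq : HasFDerivAt
        (fun z : E => ‖eL.toContinuousLinearMap z - eL (extChartAt I p p)‖^2)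
        (2 • ((innerSL ℝ u₀).comp eL.toContinuousLinearMap)) (extChartAt I p x) := hA.norm_sq
    have hq2 : HasFDerivAt
        (fun z : E => c p * ‖eL.toContinuousLinearMap z - eL (extChartAt I p p)‖^2)
        (c p • (2 • ((innerSL ℝ u₀).comp eL.toContinuousLinearMap))) (extChartAt I p x) :=
      hq.const_mul (c p)
    set L : E →L[ℝ] ℝ :=
      (reebBump t₀ / reebC) • (c p • (2 • ((innerSL ℝ u₀).comp eL.toContinuousLinearMap)))
      with hLdef
    have hG : HasFDerivAt
        (fun z : E => reebStep (c p * ‖eL.toContinuousLinearMap z - eL (extChartAt I p p)‖^2))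
        L (extChartAt I p x) :=
      by have := HasDerivAt.comp_hasFDerivAt (extChartAt I p x) (hasDerivAt_reebStep t₀) hq2; exact this
    have hGm : HasMFDerivAt 𝓘(ℝ, E) 𝓘(ℝ)
        (fun z : E => reebStep (c p * ‖eL.toContinuousLinearMap z - eL (extChartAt I p p)‖^2))
        (extChartAt I p x) L := hG.hasMFDerivAt
    have hsrc : x ∈ (chartAt H p).source := by
      rw [← extChartAt_source I]; exact hxW.1
    have hψm := hasMFDerivAt_extChartAt (I := I) hsrc
    have hcompm := hGm.comp x hψm
    have hgm : HasMFDerivAt I 𝓘(ℝ) (g p) x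
        (L.comp (mfderiv I I (chartAt H p) x : TangentSpace I x →L[ℝ] E)) := by
      apply hcompm.congr_of_eventuallyEq
      filter_upwards [(hWopen p).mem_nhds hxW] with y hy
      rw [hg]
      simp only [if_pos hy, Function.comp_apply, map_sub]
      rfl
    rw [hgm.mfderiv] at hm0
    have hψeq : mfderiv I 𝓘(ℝ, E) (extChartAt I p) x
        = (mfderiv I I (chartAt H p) x : TangentSpace I x →L[ℝ] E) := hψm.mfderiv
    have hid := mfderiv_extChartAt_comp_mfderivWithin_extChartAt_symm' (I := I) hxW.1
    rw [hψeq] at hid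
    have hL0 : L = 0 := by
      have h2 := congrArg (fun T => L.comp T) hid
      erw [← ContinuousLinearMap.comp_assoc, hm0, ContinuousLinearMap.zero_comp,
        ContinuousLinearMap.comp_id] at h2
      exact h2.symm
    have hval : L (eL.symm u₀) = 0 := by rw [hL0]; rfl
    have hcomp2 : L (eL.symm u₀)
        = (reebBump t₀ / reebC) * (c p * (2 * ‖u₀‖^2)) := by
      rw [hLdef]
      simp only [ContinuousLinearMap.smul_apply, ContinuousLinearMap.comp_apply, smul_eq_mul]
      congr 2
      have heval : eL.toContinuousLinearMap (eL.symm u₀) = u₀ := by simp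
      rw [two_smul, heval]
      have hinner : (innerSL ℝ u₀) u₀ = ‖u₀‖^2 := real_inner_self_eq_norm_sq u₀
      rw [hinner]; ring
    rw [hcomp2] at hval
    have hpos : 0 < (reebBump t₀ / reebC) * (c p * (2 * ‖u₀‖^2)) := by
      apply mul_pos (div_pos (reebBump_pos h0 h1) reebC_pos)
      apply mul_pos (hc0 p)
      linarith
    rw [hval] at hpos
    exact lt_irrefl 0 hpos
  have hwitness : ∀ p, ∃ x ∈ Metric.ball p δ, g p x = 1 ∧ x ∈ W p := by
    intro p
    have hε := hε0 p
    set i₀ : Fin (Module.finrank ℝ E) := ⟨0, hdim⟩ with hi₀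
    set v : EuclideanSpace ℝ (Fin (Module.finrank ℝ E)) :=
      EuclideanSpace.single i₀ (3 * ε p / 4) with hv
    set z₀ : E := extChartAt I p p + eL.symm v with hz₀def
    have hz₀ : eL (z₀ - extChartAt I p p) = v := by
      rw [hz₀def]
      simp
    have hnv : ‖v‖ = 3 * ε p / 4 := by
      rw [hv, EuclideanSpace.norm_single, Real.norm_eq_abs, abs_of_nonneg (by linarith)]
    have hle : ‖eL (z₀ - extChartAt I p p)‖ ≤ ε p := by
      rw [hz₀, hnv]; linarith
    have htgt := hεtgt p z₀ hle
    set x₀ := (extChartAt I p).symm z₀ with hx₀def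
    have hx₀src : x₀ ∈ (extChartAt I p).source := (extChartAt I p).map_target htgt
    have hinv : extChartAt I p x₀ = z₀ := (extChartAt I p).right_inv htgt
    have hx₀W : x₀ ∈ W p := by
      refine ⟨hx₀src, ?_⟩
      rw [hinv, hz₀, hnv]; linarith
    refine ⟨x₀, hWball p hx₀W, ?_, hx₀W⟩
    rw [hg]
    simp only [if_pos hx₀W]
    apply reebStep_one_of_one_le
    have hval : ‖eL (extChartAt I p x₀ - extChartAt I p p)‖ = 3 * ε p / 4 := by
      rw [hinv, hz₀, hnv]
    rw [hval, hc]
    have h94 : 4 / (ε p)^2 * (3 * ε p / 4)^2 = 9/4 := by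
      field_simp; ring
    rw [h94]; norm_num
  have hKdisj : ∀ p ∈ S, ∀ q ∈ S, p ≠ q → ∀ x, x ∈ K p → x ∉ K q := by
    intro p hp q hq hpq x hxp hxq
    have h1 := hWball p (hKW p hxp)
    have h2 := hWball q (hKW q hxq)
    have h3 := hδsep p hp q hq hpq
    have hd : dist p q ≤ dist p x + dist x q := dist_triangle p x q
    rw [Metric.mem_ball, dist_comm] at h1
    rw [Metric.mem_ball] at h2
    linarith
  refine ⟨fun x => ∏ p ∈ S, g p x, ?_, ?_, ?_, ?_, ?_⟩
  · exact contMDiff_finset_prod (fun p _ => fun x => hgsmooth p x)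
  · intro x
    exact ⟨Finset.prod_nonneg fun p _ => (hg01 p x).1,
      Finset.prod_le_one (fun p _ => (hg01 p x).1) (fun p _ => (hg01 p x).2)⟩
  · obtain ⟨p₀, hp₀⟩ := hFne
    have hp₀S : p₀ ∈ S := hFfin.mem_toFinset.mpr hp₀
    obtain ⟨x₀, hx₀ball, hx₀one, hx₀W⟩ := hwitness p₀
    refine ⟨x₀, Finset.prod_eq_one fun q hq => ?_⟩
    by_cases hqp : q = p₀
    · rw [hqp]; exact hx₀one
    · apply hgone q
      intro hxK
      have h2 := hWball q (hKW q hxK)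
      have h3 := hδsep p₀ hp₀S q hq (Ne.symm hqp)
      rw [Metric.mem_ball] at hx₀ball h2
      rw [dist_comm] at hx₀ball
      have hd := dist_triangle p₀ x₀ q
      linarith
  · ext x
    simp only [Set.mem_preimage, Set.mem_singleton_iff]
    rw [Finset.prod_eq_zero_iff]
    constructor
    · rintro ⟨p, hp, hgp⟩
      rw [(hgzero p x).mp hgp]
      exact hFfin.mem_toFinset.mp hp
    · intro hx
      exact ⟨x, hFfin.mem_toFinset.mpr hx, (hgzero x x).mpr rfl⟩
  · intro x hm
    by_cases hx : ∃ p ∈ S, x ∈ K p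
    · obtain ⟨p, hpS, hxK⟩ := hx
      have hOopen : IsOpen (⋂ q ∈ S.erase p, (K q)ᶜ) :=
        isOpen_biInter_finset fun q _ => (hKclosed q).isOpen_compl
      have hxO : x ∈ ⋂ q ∈ S.erase p, (K q)ᶜ := by
        rw [Set.mem_iInter₂]
        intro q hq
        have hqS := Finset.mem_of_mem_erase hq
        have hqp := Finset.ne_of_mem_erase hq
        exact hKdisj p hpS q hqS (Ne.symm hqp) x hxK
      have hfg : (fun y => ∏ q ∈ S, g q y) =ᶠ[nhds x] g p := by
        filter_upwards [hOopen.mem_nhds hxO] with y hy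
        rw [← Finset.mul_prod_erase S (fun q => g q y) hpS]
        rw [Finset.prod_eq_one, mul_one]
        intro q hq
        exact hgone q y (Set.mem_iInter₂.mp hy q hq)
      have hfx : (∏ q ∈ S, g q x) = g p x := hfg.eq_of_nhds
      show (∏ q ∈ S, g q x) = 0 ∨ (∏ q ∈ S, g q x) = 1
      rw [hfx]
      rw [hfg.mfderiv_eq] at hm
      exact hcrit p x (hKW p hxK) hm
    · push_neg at hx
      right
      exact Finset.prod_eq_one fun q hq => hgone q x (hx q hq)
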